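/- Monomial ideal inclusion (Proposition on I_g ⊂ J_g, case d = 2): Let λ_1 ≺ ⋯ ≺ λ_g ∈ ℚ^2_{≥0} be characteristic exponents of a normalized quasi-ordinary surface branch, λ̄_j the semigroup generators, and m_i (i = 1, 2) as above. Then for any pair of generators γ, γ' ∈ {e_1, e_2, λ̄_1, …, λ̄_g} with γ ∧ γ' ≠ 0, there exists β in the set Ξ_g = {e_1 + e_2} ∪ { e_2 + λ_{m_1} if m_1 ≤ g } ∪ { e_1 + λ_{m_2} if m_2 ≤ g } such that β ⪯ γ + γ' coordinatewise. -/

import Mathlib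

lemma det_ne_zero_of_li (v w : Fin 2 → ℚ) (h : LinearIndependent ℚ ![v, w]) :
    v 0 * w 1 - v 1 * w 0 ≠ 0 := by
  intro hdet
  rw [LinearIndependent.pair_iff] at h
  have key : ∀ s t : ℚ, s * v 0 + t * w 0 = 0 → s * v 1 + t * w 1 = 0 →
      s = 0 ∧ t = 0 := by
    intro s t h0 h1
    refine h s t ?_
    funext i
    fin_cases i <;> simp only [Pi.add_apply, Pi.smul_apply, smul_eq_mul, Pi.zero_apply] <;>
      [exact h0; exact h1]
  by_cases hz : v 1 = 0 ∧ w 1 = 0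
  · obtain ⟨h1, h2⟩ := key (w 0) (-(v 0)) (by ring) (by rw [hz.1, hz.2]; ring)
    obtain ⟨h3, h4⟩ := key 0 1 (by rw [h1]; ring) (by rw [hz.2]; ring)
    norm_num at h4
  · obtain ⟨h1, h2⟩ := key (w 1) (-(v 1)) (by linear_combination hdet) (by ring)
    exact hz ⟨by linarith, h1⟩

def intLat : AddSubgroup (Fin 2 → ℚ) where
  carrier := {x | ∀ i, ∃ z : ℤ, x i = z}
  zero_mem' := fun i => ⟨0, by simp⟩
  add_mem' := by
    rintro a b ha hb i
    obtain ⟨za, hza⟩ := ha i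
    obtain ⟨zb, hzb⟩ := hb i
    exact ⟨za + zb, by push_cast [Pi.add_apply, hza, hzb]; ring⟩
  neg_mem' := by
    rintro a ha i
    obtain ⟨za, hza⟩ := ha i
    exact ⟨-za, by push_cast [Pi.neg_apply, hza]; ring⟩

lemma single_mem_intLat : ∀ x ∈ (Set.range fun i : Fin 2 => (Pi.single i 1 : Fin 2 → ℚ)),
    x ∈ intLat := by
  rintro x ⟨i, rfl⟩ i'
  rcases eq_or_ne i' i with rfl | hne
  · exact ⟨1, by simp⟩
  · exact ⟨0, by simp [Pi.single_eq_of_ne hne]⟩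

/-- Monomial ideal inclusion I_g ⊂ J_g in dimension d = 2: for any pair of
semigroup generators γ, γ' ∈ {e_1, e_2, λ̄_1, …, λ̄_g} with γ ∧ γ' ≠ 0
(i.e. γ, γ' linearly independent over ℚ), there is an exponent β in the set
Ξ_g = {e_1+e_2} ∪ {e_2 + λ_{m_1} if m_1 ≤ g} ∪ {e_1 + λ_{m_2} if m_2 ≤ g}
with β ⪯ γ + γ' coordinatewise. -/
theorem stmt18 (g : ℕ) (lam lamb : ℕ → (Fin 2 → ℚ)) (n : ℕ → ℕ)
    (Msub : ℕ → AddSubgroup (Fin 2 → ℚ))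
    (hM : ∀ j, Msub j = AddSubgroup.closure
      ((Set.range fun i : Fin 2 => (Pi.single i 1 : Fin 2 → ℚ)) ∪
        (lam '' Set.Icc 1 j)))
    (hpos : ∀ j, 1 ≤ j → j ≤ g → ∀ i, 0 ≤ lam j i)
    (hchain : ∀ j, 1 ≤ j → j < g → lam j ≤ lam (j + 1) ∧ lam j ≠ lam (j + 1))
    (hn : ∀ j, 1 ≤ j → j ≤ g → 2 ≤ n j)
    (hindex : ∀ j, 1 ≤ j → j ≤ g → (Msub (j - 1)).relIndex (Msub j) = n j)
    (hb1 : lamb 1 = lam 1)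
    (hbrec : ∀ j, 1 ≤ j → j < g →
      lamb (j + 1) = (n j : ℚ) • lamb j + lam (j + 1) - lam j)
    -- normalized branch: λ_{1,1} ≠ 0 and if λ_{1,2} = 0 then λ_{1,1} > 1
    (hnorm : lam 1 0 ≠ 0 ∧ (lam 1 1 = 0 → 1 < lam 1 0))
    (m1 m2 : ℕ)
    (hm1 : 1 ≤ m1 ∧ m1 ≤ g + 1 ∧ (∀ j, 1 ≤ j → j < m1 → lamb j 0 = 0) ∧
      (m1 ≤ g → lamb m1 0 ≠ 0))
    (hm2 : 1 ≤ m2 ∧ m2 ≤ g + 1 ∧ (∀ j, 1 ≤ j → j < m2 → lamb j 1 = 0) ∧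
      (m2 ≤ g → lamb m2 1 ≠ 0))
    (γ γ' : Fin 2 → ℚ)
    (hγ : γ ∈ insert (Pi.single 0 1 : Fin 2 → ℚ)
      (insert (Pi.single 1 1) (lamb '' Set.Icc 1 g)))
    (hγ' : γ' ∈ insert (Pi.single 0 1 : Fin 2 → ℚ)
      (insert (Pi.single 1 1) (lamb '' Set.Icc 1 g)))
    (hind : LinearIndependent ℚ ![γ, γ']) :
    ∃ β ∈ ({Pi.single 0 1 + Pi.single 1 1} : Set (Fin 2 → ℚ))
        ∪ {v | m1 ≤ g ∧ v = Pi.single 1 1 + lam m1}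
        ∪ {v | m2 ≤ g ∧ v = Pi.single 0 1 + lam m2},
      β ≤ γ + γ' := by
  obtain ⟨hm11, hm12, hm13, hm14⟩ := hm1
  obtain ⟨hm21, hm22, hm23, hm24⟩ := hm2
  have hdet := det_ne_zero_of_li γ γ' hind
  -- λ_1 has positive first coordinate (when g ≥ 1)
  have hl1pos : 1 ≤ g → 0 < lam 1 0 :=
    fun hg => lt_of_le_of_ne (hpos 1 le_rfl hg 0) (Ne.symm hnorm.1)
  -- m1 = 1
  have hm1e : m1 = 1 := by
    by_contra h
    have h2 : 1 < m1 := by omega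
    have := hm13 1 le_rfl h2
    rw [hb1] at this
    exact hnorm.1 this
  -- monotonicity of lam on [1, g]
  have hlmono : ∀ a b, 1 ≤ a → a ≤ b → b ≤ g → ∀ i, lam a i ≤ lam b i := by
    intro a b ha hab
    induction b, hab using Nat.le_induction with
    | base => exact fun _ i => le_rfl
    | succ k hk ih =>
      intro hkg i
      have h1 := ih (by omega) i
      have h2 := (hchain k (by omega) (by omega)).1 i
      linarith
  -- nonnegativity and lam ≤ lamb
  have hnn : ∀ j, 1 ≤ j → j ≤ g → (∀ i, 0 ≤ lamb j i) ∧ (∀ i, lam j i ≤ lamb j i) := by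
    intro j hj
    induction j, hj using Nat.le_induction with
    | base =>
      intro hg
      rw [hb1]
      exact ⟨hpos 1 le_rfl hg, fun i => le_rfl⟩
    | succ k hk ih =>
      intro hkg
      have hklt : k < g := by omega
      obtain ⟨ih1, ih2⟩ := ih (by omega)
      have hrec := hbrec k hk hklt
      have hcast : (2 : ℚ) ≤ (n k : ℚ) := by exact_mod_cast hn k hk (by omega)
      constructor <;> intro i <;> rw [hrec] <;>
        simp only [Pi.sub_apply, Pi.add_apply, Pi.smul_apply, smul_eq_mul]
      · have h2l : 2 * lamb k i ≤ (n k : ℚ) * lamb k i :=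
          mul_le_mul_of_nonneg_right hcast (ih1 i)
        have h3 := (hchain k hk hklt).1 i
        have h4 := ih2 i
        have h5 := hpos k hk (by omega) i
        linarith
      · have h2l : 2 * lamb k i ≤ (n k : ℚ) * lamb k i :=
          mul_le_mul_of_nonneg_right hcast (ih1 i)
        have h4 := ih2 i
        have h5 := hpos k hk (by omega) i
        linarith
  -- step inequality
  have hstep : ∀ k, 1 ≤ k → k < g → ∀ i, lamb k i + lam (k + 1) i ≤ lamb (k + 1) i := by
    intro k hk hkg i
    have hrec := hbrec k hk hkg
    have hcast : (2 : ℚ) ≤ (n k : ℚ) := by exact_mod_cast hn k hk (by omega)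
    obtain ⟨ih1, ih2⟩ := hnn k hk (by omega)
    have h2l : 2 * lamb k i ≤ (n k : ℚ) * lamb k i :=
      mul_le_mul_of_nonneg_right hcast (ih1 i)
    have h4 := ih2 i
    rw [hrec]
    simp only [Pi.sub_apply, Pi.add_apply, Pi.smul_apply, smul_eq_mul]
    linarith
  -- monotonicity of lamb on [1, g]
  have hbmono : ∀ a b, 1 ≤ a → a ≤ b → b ≤ g → ∀ i, lamb a i ≤ lamb b i := by
    intro a b ha hab
    induction b, hab using Nat.le_induction with
    | base => exact fun _ i => le_rfl
    | succ k hk ih =>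
      intro hkg i
      have h1 := ih (by omega) i
      have h2 := hstep k (by omega) (by omega) i
      have h3 := hpos (k + 1) (by omega) hkg i
      linarith
  -- integrality: lamb 2 0 ≥ 1 (needs the lattice index hypothesis)
  have hint : 2 ≤ g → 1 ≤ lamb 2 0 := by
    intro hg2
    have hle01 : Msub 0 ≤ Msub 1 := by
      rw [hM 0, hM 1]
      exact AddSubgroup.closure_mono (Set.union_subset_union_right _
        (Set.image_mono (Set.Icc_subset_Icc_right (by norm_num))))
    have hl1mem : lam 1 ∈ Msub 1 := by
      rw [hM 1]
      exact AddSubgroup.subset_closure (Or.inr ⟨1, by simp, rfl⟩)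
    have hidx : ((Msub 0).addSubgroupOf (Msub 1)).index = n 1 :=
      hindex 1 le_rfl (by omega)
    have hmem : n 1 • lam 1 ∈ Msub 0 := by
      have h := ((Msub 0).addSubgroupOf (Msub 1)).nsmul_index_mem
        (⟨lam 1, hl1mem⟩ : Msub 1)
      rw [hidx, AddSubgroup.mem_addSubgroupOf] at h
      simpa using h
    have hZ : n 1 • lam 1 ∈ intLat := by
      have : Msub 0 ≤ intLat := by
        rw [hM 0]
        refine (AddSubgroup.closure_le _).2 ?_
        rintro x (hx | hx)
        · exact single_mem_intLat x hx
        · exfalso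
          obtain ⟨j, hj, -⟩ := hx
          simp [Set.Icc] at hj
          omega
      exact this hmem
    obtain ⟨z, hz⟩ := hZ 0
    have hz' : (n 1 : ℚ) * lam 1 0 = z := by
      simpa [Pi.smul_apply] using hz
    have hpos1 : 0 < lam 1 0 := hl1pos (by omega)
    have hn2 : (2 : ℚ) ≤ (n 1 : ℚ) := by exact_mod_cast hn 1 le_rfl (by omega)
    have hzpos : (0 : ℚ) < z := by
      rw [← hz']
      positivity
    have hz1 : (1 : ℚ) ≤ z := by
      have : (0 : ℤ) < z := by exact_mod_cast hzpos
      exact_mod_cast this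
    have hrec := hbrec 1 le_rfl (by omega)
    have h2 : lam 1 0 ≤ lam 2 0 := (hchain 1 le_rfl (by omega)).1 0
    rw [hrec]
    simp only [Pi.sub_apply, Pi.add_apply, Pi.smul_apply, smul_eq_mul, hb1]
    linarith [hz', hz1]
  have hone : ∀ k, 2 ≤ k → k ≤ g → 1 ≤ lamb k 0 := by
    intro k h2 hg
    exact le_trans (hint (by omega)) (hbmono 2 k (by omega) h2 hg 0)
  -- minimality of m2
  have hm2lam : ∀ j, 1 ≤ j → lamb j 1 ≠ 0 → m2 ≤ j := by
    intro j h1 hne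
    by_contra h
    exact hne (hm23 j h1 (by omega))
  -- core case: two lamb's
  have core : ∀ a b, 1 ≤ a → a < b → b ≤ g → (lamb a 1 ≠ 0 ∨ lamb b 1 ≠ 0) →
      m2 ≤ g ∧ ∀ i, (Pi.single 0 1 + lam m2 : Fin 2 → ℚ) i ≤ lamb a i + lamb b i := by
    intro a b ha hab hbg hor
    have hag : a ≤ g := by omega
    have hm2b : m2 ≤ b := by
      rcases hor with h | h
      · exact le_trans (hm2lam a ha h) (le_of_lt hab)
      · exact hm2lam b (by omega) h
    have hm2g : m2 ≤ g := le_trans hm2b hbg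
    refine ⟨hm2g, ?_⟩
    have hm2le_b : ∀ i, lamb m2 i ≤ lamb b i := hbmono m2 b hm21 hm2b hbg
    have hlam_le : ∀ i, lam m2 i ≤ lamb m2 i := (hnn m2 hm21 hm2g).2
    have hba0 : 0 ≤ lamb a 0 := (hnn a ha hag).1 0
    have hba1 : 0 ≤ lamb a 1 := (hnn a ha hag).1 1
    intro i
    fin_cases i
    · -- first coordinate
      simp only [Pi.add_apply, Pi.single_eq_same]
      show 1 + lam m2 0 ≤ lamb a 0 + lamb b 0
      rcases le_or_gt m2 a with h | h
      · have h1 : 1 ≤ lamb b 0 := hone b (by omega) hbg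
        have h2 : lam m2 0 ≤ lamb a 0 :=
          le_trans (hlam_le 0) (hbmono m2 a hm21 h hag 0)
        linarith
      · have hm2ge2 : 2 ≤ m2 := by omega
        have hstep' : lamb (m2 - 1) 0 + lam m2 0 ≤ lamb m2 0 := by
          have h0 := hstep (m2 - 1) (by omega) (by omega) 0
          have e : m2 - 1 + 1 = m2 := by omega
          rwa [e] at h0
        rcases eq_or_lt_of_le hm2ge2 with he | h3
        · -- m2 = 2, a = 1
          have ha1 : a = 1 := by omega
          have hz : lam 1 1 = 0 := by
            have h5 := hm23 1 le_rfl (by omega)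
            rwa [hb1] at h5
          have hgt := hnorm.2 hz
          have he1 : m2 - 1 = 1 := by omega
          rw [he1, hb1] at hstep'
          have h6 := hm2le_b 0
          rw [ha1, hb1]
          linarith
        · -- m2 ≥ 3
          have h4 : 1 ≤ lamb (m2 - 1) 0 := hone (m2 - 1) (by omega) (by omega)
          have h6 := hm2le_b 0
          linarith
    · -- second coordinate
      show (Pi.single 0 1 + lam m2 : Fin 2 → ℚ) 1 ≤ lamb a 1 + lamb b 1
      have hs : (Pi.single 0 1 : Fin 2 → ℚ) 1 = 0 := by simp
      simp only [Pi.add_apply, hs]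
      have h1 := hlam_le 1
      have h2 := hm2le_b 1
      linarith
  -- helper: e1 paired with lamb j
  have case_e1 : ∀ j, 1 ≤ j → j ≤ g → lamb j 1 ≠ 0 →
      m2 ≤ g ∧ ∀ i, (Pi.single 0 1 + lam m2 : Fin 2 → ℚ) i ≤
        (Pi.single 0 1 : Fin 2 → ℚ) i + lamb j i := by
    intro j h1 h2 hne
    have hm2j := hm2lam j h1 hne
    have hm2g := le_trans hm2j h2
    refine ⟨hm2g, fun i => ?_⟩
    have h3 : lam m2 i ≤ lamb j i :=
      le_trans ((hnn m2 hm21 hm2g).2 i) (hbmono m2 j hm21 hm2j h2 i)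
    simp only [Pi.add_apply]
    linarith
  -- helper: e2 paired with lamb j
  have case_e2 : ∀ j, 1 ≤ j → j ≤ g →
      m1 ≤ g ∧ ∀ i, (Pi.single 1 1 + lam m1 : Fin 2 → ℚ) i ≤
        (Pi.single 1 1 : Fin 2 → ℚ) i + lamb j i := by
    intro j h1 h2
    rw [hm1e]
    refine ⟨by omega, fun i => ?_⟩
    have h3 : lam 1 i ≤ lamb j i := by
      rw [← hb1]
      exact hbmono 1 j le_rfl h1 h2 i
    simp only [Pi.add_apply]
    linarith
  simp only [Set.mem_insert_iff, Set.mem_image, Set.mem_Icc] at hγ hγ'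
  simp only [Set.mem_union, Set.mem_singleton_iff, Set.mem_setOf_eq]
  rcases hγ with rfl | rfl | ⟨j, ⟨hj1, hjg⟩, rfl⟩ <;>
    rcases hγ' with rfl | rfl | ⟨k, ⟨hk1, hkg⟩, rfl⟩
  · exfalso; apply hdet; simp [Pi.single_apply]
  · exact ⟨_, Or.inl (Or.inl rfl), le_refl _⟩
  · have hne : lamb k 1 ≠ 0 := by
      intro h
      apply hdet
      simp [Pi.single_apply, h]
    obtain ⟨hg, hle⟩ := case_e1 k hk1 hkg hne
    exact ⟨_, Or.inr ⟨hg, rfl⟩, by rw [Pi.le_def]; intro i; exact hle i⟩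
  · refine ⟨_, Or.inl (Or.inl rfl), le_of_eq (add_comm _ _)⟩
  · exfalso; apply hdet; simp [Pi.single_apply]
  · obtain ⟨hg, hle⟩ := case_e2 k hk1 hkg
    exact ⟨_, Or.inl (Or.inr ⟨hg, rfl⟩), by rw [Pi.le_def]; intro i; exact hle i⟩
  · -- lamb j with e1
    have hne : lamb j 1 ≠ 0 := by
      intro h
      apply hdet
      simp [Pi.single_apply, h]
    obtain ⟨hg, hle⟩ := case_e1 j hj1 hjg hne
    refine ⟨_, Or.inr ⟨hg, rfl⟩, ?_⟩
    rw [Pi.le_def]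
    intro i
    have := hle i
    simp only [Pi.add_apply] at *
    linarith
  · -- lamb j with e2
    obtain ⟨hg, hle⟩ := case_e2 j hj1 hjg
    refine ⟨_, Or.inl (Or.inr ⟨hg, rfl⟩), ?_⟩
    rw [Pi.le_def]
    intro i
    have := hle i
    simp only [Pi.add_apply] at *
    linarith
  · -- lamb j with lamb k
    have hjk : j ≠ k := by
      rintro rfl
      apply hdet
      ring
    have hor : lamb j 1 ≠ 0 ∨ lamb k 1 ≠ 0 := by
      by_contra h
      push_neg at h
      apply hdet
      rw [h.1, h.2]
      ring
    rcases lt_or_gt_of_ne hjk with h | h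
    · obtain ⟨hg, hle⟩ := core j k hj1 h hkg hor
      exact ⟨_, Or.inr ⟨hg, rfl⟩, by rw [Pi.le_def]; intro i; exact hle i⟩
    · obtain ⟨hg, hle⟩ := core k j hk1 h hjg hor.symm
      refine ⟨_, Or.inr ⟨hg, rfl⟩, ?_⟩
      rw [Pi.le_def]
      intro i
      have := hle i
      simp only [Pi.add_apply] at *
      linarith
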